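/- Let G = (V, E) be a finite connected simple graph with |V| ≥ 4 and let v0 ∈ V be a nexus of G, i.e. the induced subgraph of G on V ∖ {v0} is disconnected. Then v0 is a fat nexus of G: there exists a partition V = {v0} ⊔ V1 ⊔ V2 satisfying the fat nexus conditions (a), (b), (c). -/

import Mathlib

theorem stmt_7 {V : Type*} [Fintype V] [DecidableEq V]
    (G : SimpleGraph V) (hconn : G.Connected)
    (hcard : 4 ≤ Fintype.card V)
    (v0 : V)
    -- `v0` is a nexus: the induced subgraph on `V ∖ {v0}` is disconnected
    (hnexus : ¬ (G.induce ({v0}ᶜ : Set V)).Connected) :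
    -- `v0` is a fat nexus
    ∃ V1 V2 : Set V,
      -- `V = {v0} ⊔ V1 ⊔ V2` is a partition
      v0 ∉ V1 ∧ v0 ∉ V2 ∧ V1 ∩ V2 = ∅ ∧ {v0} ∪ V1 ∪ V2 = Set.univ ∧
      -- (a) both parts are nonempty
      V1.Nonempty ∧ V2.Nonempty ∧
      -- (b) every edge between `V1` and `V2` has both endpoints in the closed
      -- neighborhood `V0` of `v0`
      (∀ a ∈ V1, ∀ b ∈ V2, G.Adj a b →
        a ∈ insert v0 (G.neighborSet v0) ∧ b ∈ insert v0 (G.neighborSet v0)) ∧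
      -- (c) if `G` is a cone with apex `v0`, then `|V1| ≠ |V2|`
      (insert v0 (G.neighborSet v0) = Set.univ → V1.ncard ≠ V2.ncard) := by
  classical
  obtain ⟨a, ha⟩ : ∃ a : V, a ≠ v0 := by
    have h1 : 1 < Fintype.card V := by omega
    exact Fintype.exists_ne_of_one_lt_card h1 v0
  by_cases hcone : (insert v0 (G.neighborSet v0) : Set V) = Set.univ
  · -- cone case : take V1 = {a}, V2 = complement of {v0, a}
    refine ⟨{a}, ({v0, a} : Set V)ᶜ, ?_, ?_, ?_, ?_, ⟨a, rfl⟩, ?_, ?_, ?_⟩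
    · simp [Ne.symm ha]
    · simp
    · ext x; simp only [Set.mem_inter_iff, Set.mem_singleton_iff, Set.mem_compl_iff,
        Set.mem_insert_iff, Set.mem_empty_iff_false, iff_false, not_and]
      intro hx; subst hx; tauto
    · ext x; simp only [Set.mem_union, Set.mem_singleton_iff, Set.mem_compl_iff,
        Set.mem_insert_iff, Set.mem_univ, iff_true]
      tauto
    · -- complement nonempty
      by_contra h
      rw [Set.not_nonempty_iff_eq_empty, Set.compl_empty_iff] at h
      have : Fintype.card V = ({v0, a} : Set V).ncard := by
        rw [h, Set.ncard_univ, Nat.card_eq_fintype_card]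
      have h2 : ({v0, a} : Set V).ncard ≤ 2 := by
        apply le_trans (Set.ncard_insert_le _ _)
        simp
      omega
    · intro x hx b hb hadj
      rw [hcone]; exact ⟨trivial, trivial⟩
    · intro _
      have h1 : ({a} : Set V).ncard = 1 := Set.ncard_singleton a
      have h2 : (({v0, a} : Set V)ᶜ).ncard = Fintype.card V - 2 := by
        have hp : ({v0, a} : Set V).ncard = 2 := by
          rw [Set.ncard_pair (Ne.symm ha)]
        have := Set.ncard_add_ncard_compl ({v0, a} : Set V)
        rw [Nat.card_eq_fintype_card, hp] at this
        omega
      rw [h1, h2]; omega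
  · -- non-cone case
    have hne : Nonempty (({v0}ᶜ : Set V)) := ⟨⟨a, ha⟩⟩
    rw [SimpleGraph.connected_iff] at hnexus
    push_neg at hnexus
    have hnp : ¬ (G.induce ({v0}ᶜ : Set V)).Preconnected := fun h => isEmpty_iff.mp (hnexus h) ⟨a, ha⟩
    rw [SimpleGraph.Preconnected] at hnp
    push_neg at hnp
    obtain ⟨x, y, hxy⟩ := hnp
    set H := G.induce ({v0}ᶜ : Set V) with hH
    refine ⟨{v | ∃ h : v ∈ ({v0}ᶜ : Set V), H.Reachable x ⟨v, h⟩},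
            {v | ∃ h : v ∈ ({v0}ᶜ : Set V), ¬ H.Reachable x ⟨v, h⟩}, ?_, ?_, ?_, ?_, ?_, ?_, ?_, ?_⟩
    · rintro ⟨h, -⟩; exact h rfl
    · rintro ⟨h, -⟩; exact h rfl
    · ext v; simp only [Set.mem_inter_iff, Set.mem_setOf_eq, Set.mem_empty_iff_false, iff_false,
        not_and]
      rintro ⟨h1, h2⟩ ⟨h3, h4⟩; exact h4 h2
    · ext v
      simp only [Set.mem_union, Set.mem_singleton_iff, Set.mem_setOf_eq, Set.mem_univ, iff_true]
      by_cases hv : v = v0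
      · left; left; exact hv
      · by_cases hr : H.Reachable x ⟨v, hv⟩
        · left; right; exact ⟨hv, hr⟩
        · right; exact ⟨hv, hr⟩
    · exact ⟨x.1, x.2, by simpa using SimpleGraph.Reachable.refl x⟩
    · exact ⟨y.1, y.2, by simpa using hxy⟩
    · rintro p ⟨hp, hpr⟩ q ⟨hq, hqr⟩ hadj
      exfalso
      have hadj' : H.Adj ⟨p, hp⟩ ⟨q, hq⟩ := by
        exact hadj
      exact hqr (hpr.trans hadj'.reachable)
    · intro h; exact absurd h hcone
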